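/- Let K and L be fields of characteristic p > 0 with Frobenius endomorphism 𝐩 on L, and suppose σ₁,…,σₙ, τ₁,…,τ_m : K → L (n ≥ m ≥ 1) are field homomorphisms with Π_{i=1}^n σᵢ(a) = Π_{j=1}^m τⱼ(a) for all a ∈ K, and some p of the σᵢ coincide. Then for every j with 1 ≤ j ≤ m there exist an integer l with −(m−1) ≤ l(p−1) ≤ n−1 and an index i with τⱼ = 𝐩^l ∘ σᵢ; and for every i there exist an integer l with −(n−1) ≤ l(p−1) ≤ m−1 and an index j with σᵢ = 𝐩^l ∘ τⱼ. -/

import Mathlib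

open Finset

section Aux

variable {L : Type*} [Field L] {p : ℕ}

lemma ex1 {M : Type*} [CommMonoid M] {ι : Type*} [DecidableEq (M →* L)]
    (t : Finset ι) (A : ι → (M →* L)) (c : ι → L)
    (h : ∀ x : M, ∑ i ∈ t, c i * A i x = 0) (θ : M →* L) :
    ∑ i ∈ t.filter (fun i => A i = θ), c i = 0 := by
  classical
  by_cases hθ : θ ∈ t.image A
  · have hli := (linearIndependent_monoidHom M L).comp
      (fun θ' : ↥(t.image A) => (θ' : M →* L)) Subtype.val_injective
    rw [Fintype.linearIndependent_iff] at hli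
    have key := hli (fun θ' : ↥(t.image A) =>
      ∑ i ∈ t.filter (fun i => A i = (θ' : M →* L)), c i) ?_ ⟨θ, hθ⟩
    · exact key
    · funext x
      simp only [Function.comp, Finset.sum_apply, Pi.smul_apply, smul_eq_mul, Pi.zero_apply]
      have h2 : ∀ θ'' ∈ t.image A,
          (∑ i ∈ t.filter (fun i => A i = θ''), c i) * θ'' x
          = ∑ i ∈ t.filter (fun i => A i = θ''), c i * A i x := by
        intro θ'' _
        rw [Finset.sum_mul]
        exact Finset.sum_congr rfl fun i hi => by rw [(Finset.mem_filter.1 hi).2]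
      calc (∑ θ' : ↥(t.image A), (∑ i ∈ t.filter (fun i => A i = (θ' : M →* L)), c i)
              * (θ' : M →* L) x)
          = ∑ θ'' ∈ t.image A, (∑ i ∈ t.filter (fun i => A i = θ''), c i) * θ'' x :=
            Finset.sum_coe_sort (t.image A)
              (fun θ'' => (∑ i ∈ t.filter (fun i => A i = θ''), c i) * θ'' x)
        _ = ∑ θ'' ∈ t.image A, ∑ i ∈ t.filter (fun i => A i = θ''), c i * A i x :=
            Finset.sum_congr rfl h2
        _ = ∑ i ∈ t, c i * A i x :=
            Finset.sum_fiberwise_of_maps_to (fun i hi => Finset.mem_image_of_mem A hi) _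
        _ = 0 := h x
  · have hemp : t.filter (fun i => A i = θ) = ∅ := by
      rw [Finset.eq_empty_iff_forall_notMem]
      intro i hi
      rw [Finset.mem_filter] at hi
      exact hθ (hi.2 ▸ Finset.mem_image_of_mem A hi.1)
    simp [hemp]

lemma ex2 {M : Type*} [CommMonoid M] {ι₁ ι₂ : Type*} [Fintype ι₁] [Fintype ι₂]
    [DecidableEq (M →* L)]
    (A : ι₁ → (M →* L)) (B : ι₂ → (M →* L))
    (h : ∀ x : M, ∑ i, A i x = ∑ i, B i x) (θ : M →* L) :
    ((univ.filter (fun i => A i = θ)).card : L)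
      = ((univ.filter (fun i => B i = θ)).card : L) := by
  classical
  have h1 := ex1 (univ : Finset (ι₁ ⊕ ι₂)) (Sum.elim A B) (Sum.elim (fun _ => (1:L)) (fun _ => (-1:L)))
    (fun x => by
      rw [Fintype.sum_sum_type]
      simp only [Sum.elim_inl, Sum.elim_inr, one_mul, neg_one_mul]
      rw [Finset.sum_neg_distrib, h x]
      ring) θ
  rw [Finset.sum_filter, Fintype.sum_sum_type] at h1
  simp only [Sum.elim_inl, Sum.elim_inr] at h1
  have e1 : ∑ i : ι₁, (if A i = θ then (1:L) else 0) = ((univ.filter (fun i => A i = θ)).card : L) := by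
    simp [Finset.sum_boole]
  have e2 : ∑ i : ι₂, (if B i = θ then (-1:L) else 0)
      = -((univ.filter (fun i => B i = θ)).card : L) := by
    have : ∀ i : ι₂, (if B i = θ then (-1:L) else 0) = -(if B i = θ then (1:L) else 0) := by
      intro i; split <;> simp
    rw [Finset.sum_congr rfl (fun i _ => this i), Finset.sum_neg_distrib]
    simp [Finset.sum_boole]
  have h1' : ((univ.filter (fun i => A i = θ)).card : L)
      + -((univ.filter (fun i => B i = θ)).card : L) = 0 := by
    rw [← e1, ← e2]; convert h1 <;> congr
  exact add_neg_eq_zero.mp h1'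

end Aux

section Core

variable {K L : Type*} [Field K] [Field L] {p : ℕ}

lemma core {J : Type*} [Fintype J] [DecidableEq J] [Fact p.Prime] [CharP L p]
    {n : ℕ} (α : Fin n → (K →+* L)) (ρ : J → (K →+* L))
    (hrel : ∀ a : K, ∏ i, α i a = ∏ j, ρ j a) :
    (∃ f : Fin n → J, ∀ u : J, ∀ a : K,
        ∏ i ∈ univ.filter (fun i => f i = u), α i a = ρ u a) ∨
      (∃ s : Finset J, s.card = p ∧ ∀ j ∈ s, ∀ j' ∈ s, ρ j = ρ j') := by
  classical
  have hp2 : 2 ≤ p := (Fact.out : p.Prime).two_le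
  let Φ : (Fin n → J) → ((J → K) →* L) := fun f =>
    ∏ i, ((α i).toMonoidHom.comp (Pi.evalMonoidHom (fun _ : J => K) (f i)))
  let Ψ : (J → J) → ((J → K) →* L) := fun g =>
    ∏ j, ((ρ j).toMonoidHom.comp (Pi.evalMonoidHom (fun _ : J => K) (g j)))
  have hΦ : ∀ f (x : J → K), Φ f x = ∏ i, α i (x (f i)) := by
    intro f x
    simp only [Φ, MonoidHom.finset_prod_apply]
    rfl
  have hΨ : ∀ g (x : J → K), Ψ g x = ∏ j, ρ j (x (g j)) := by
    intro g x
    simp only [Ψ, MonoidHom.finset_prod_apply]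
    rfl
  have hI : ∀ x : J → K, ∑ f : Fin n → J, Φ f x = ∑ g : J → J, Ψ g x := by
    intro x
    have e1 : ∑ f : Fin n → J, Φ f x = ∏ i, α i (∑ j, x j) := by
      rw [Finset.sum_congr rfl (fun f _ => hΦ f x), ← Fintype.piFinset_univ,
        Finset.sum_prod_piFinset univ (fun i j => α i (x j))]
      exact Finset.prod_congr rfl (fun i _ => by rw [map_sum])
    have e2 : ∑ g : J → J, Ψ g x = ∏ j, ρ j (∑ j', x j') := by
      rw [Finset.sum_congr rfl (fun g _ => hΨ g x), ← Fintype.piFinset_univ,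
        Finset.sum_prod_piFinset univ (fun j j' => ρ j (x j'))]
      exact Finset.prod_congr rfl (fun j _ => by rw [map_sum])
    rw [e1, e2, hrel]
  have hupdate1 : ∀ (f : Fin n → J) (u : J) (a : K),
      Φ f (Function.update (1 : J → K) u a) = ∏ i ∈ univ.filter (fun i => f i = u), α i a := by
    intro f u a
    rw [hΦ, Finset.prod_filter]
    refine Finset.prod_congr rfl (fun i _ => ?_)
    rw [Function.update_apply]
    split
    · rfl
    · simp
  have hupdate2 : ∀ (g : J → J) (u : J) (a : K),
      Ψ g (Function.update (1 : J → K) u a) = ∏ j ∈ univ.filter (fun j => g j = u), ρ j a := by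
    intro g u a
    rw [hΨ, Finset.prod_filter]
    refine Finset.prod_congr rfl (fun j _ => ?_)
    rw [Function.update_apply]
    split
    · rfl
    · simp
  have hid : ∀ (u : J) (a : K), Ψ id (Function.update (1 : J → K) u a) = ρ u a := by
    intro u a
    rw [hupdate2]
    have : univ.filter (fun j => id j = u) = {u} := by
      ext j; simp [Finset.mem_filter]
    rw [this, Finset.prod_singleton]
  by_cases hpart : ∃ f : Fin n → J, ∀ u : J, ∀ a : K,
      ∏ i ∈ univ.filter (fun i => f i = u), α i a = ρ u a
  · exact Or.inl hpart
  right
  have hcount := ex2 Φ Ψ hI (Ψ id)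
  have hzero : (univ.filter (fun f : Fin n → J => Φ f = Ψ id)) = ∅ := by
    rw [Finset.eq_empty_iff_forall_notMem]
    intro f hf
    rw [Finset.mem_filter] at hf
    refine hpart ⟨f, fun u a => ?_⟩
    calc ∏ i ∈ univ.filter (fun i => f i = u), α i a
        = Φ f (Function.update (1 : J → K) u a) := (hupdate1 f u a).symm
      _ = Ψ id (Function.update (1 : J → K) u a) := by rw [hf.2]
      _ = ρ u a := hid u a
  rw [hzero] at hcount
  simp only [Finset.card_empty, Nat.cast_zero] at hcount
  have hdvd : p ∣ (univ.filter (fun g : J → J => Ψ g = Ψ id)).card := by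
    rw [← CharP.cast_eq_zero_iff L p]
    exact hcount.symm
  have hfib : ∀ g : J → J, Ψ g = Ψ id →
      ∀ u a, ∏ j ∈ univ.filter (fun j => g j = u), ρ j a = ρ u a := by
    intro g hg u a
    rw [← hupdate2, hg, hid]
  have hbij : ∀ g : J → J, Ψ g = Ψ id → Function.Bijective g := by
    intro g hg
    have hsurj : Function.Surjective g := by
      intro u
      have hne : (univ.filter (fun j => g j = u)).Nonempty := by
        rw [Finset.nonempty_iff_ne_empty]
        intro hemp
        have h0 := hfib g hg u 0
        rw [hemp, Finset.prod_empty, map_zero] at h0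
        exact one_ne_zero h0
      obtain ⟨j, hj⟩ := hne
      exact ⟨j, (Finset.mem_filter.1 hj).2⟩
    exact (Fintype.bijective_iff_surjective_and_card g).2 ⟨hsurj, rfl⟩
  have hpoint : ∀ g : J → J, Ψ g = Ψ id → ∀ j : J, ρ (g j) = ρ j := by
    intro g hg j
    have hinj := (hbij g hg).1
    have hfilter : univ.filter (fun j' => g j' = g j) = {j} := by
      ext j'
      simp only [Finset.mem_filter, Finset.mem_univ, true_and, Finset.mem_singleton]
      exact ⟨fun h' => hinj h', fun h' => by rw [h']⟩
    ext a
    have := hfib g hg (g j) a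
    rw [hfilter, Finset.prod_singleton] at this
    exact this.symm
  let H : Subgroup (Equiv.Perm J) :=
    { carrier := {π : Equiv.Perm J | ∀ j : J, ρ (π j) = ρ j}
      one_mem' := fun _ => rfl
      mul_mem' := by
        intro π₁ π₂ h1 h2 j
        rw [Equiv.Perm.mul_apply]
        exact (h1 (π₂ j)).trans (h2 j)
      inv_mem' := by
        intro π hπ j
        have := hπ (π⁻¹ j)
        rw [Equiv.Perm.coe_inv, Equiv.apply_symm_apply] at this
        exact this.symm }
  have hcardH : p ∣ Fintype.card H := by
    have e : {g : J → J // Ψ g = Ψ id} ≃ H :=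
      { toFun := fun g => ⟨Equiv.ofBijective g.1 (hbij g.1 g.2),
          fun j => hpoint g.1 g.2 j⟩
        invFun := fun π => ⟨((π.1 : Equiv.Perm J) : J → J), by
          have hπinv : ∀ u : J, ρ ((π.1)⁻¹ u) = ρ u := by
            intro u
            have := π.2 ((π.1)⁻¹ u)
            rw [Equiv.Perm.coe_inv, Equiv.apply_symm_apply] at this
            exact this.symm
          refine MonoidHom.ext (fun x => ?_)
          rw [hΨ, hΨ]
          calc ∏ j, ρ j (x (π.1 j))
              = ∏ j, ρ ((π.1)⁻¹ (π.1 j)) (x (π.1 j)) :=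
                Finset.prod_congr rfl (fun j _ => by rw [Equiv.Perm.coe_inv, Equiv.symm_apply_apply])
            _ = ∏ u, ρ ((π.1)⁻¹ u) (x u) :=
                Equiv.prod_comp π.1 (fun u => ρ ((π.1)⁻¹ u) (x u))
            _ = ∏ u, ρ u (x u) := Finset.prod_congr rfl (fun u _ => by rw [hπinv u])
            _ = ∏ u, ρ u (x (id u)) := rfl⟩
        left_inv := fun g => Subtype.ext rfl
        right_inv := fun π => Subtype.ext (Equiv.ext (fun j => rfl)) }
    rw [← Fintype.card_congr e, Fintype.card_subtype]
    exact hdvd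
  obtain ⟨π, hπord⟩ := exists_prime_orderOf_dvd_card p hcardH
  set π₀ : Equiv.Perm J := (π : Equiv.Perm J) with hπ₀
  have hprop : ∀ j : J, ρ (π₀ j) = ρ j := π.2
  have hpow : π₀ ^ p = 1 := by
    have h1 : π ^ p = 1 := by rw [← hπord]; exact pow_orderOf_eq_one π
    have h2 := congrArg (Subtype.val) h1
    simpa using h2
  have hne1 : π₀ ≠ 1 := by
    intro h
    have h' : π = 1 := Subtype.ext h
    rw [h', orderOf_one] at hπord
    omega
  obtain ⟨j₀, hj₀⟩ : ∃ j : J, π₀ j ≠ j := by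
    by_contra hall
    push_neg at hall
    exact hne1 (Equiv.ext hall)
  have hiter : (⇑π₀)^[p] j₀ = j₀ := by
    rw [← Equiv.Perm.coe_pow, hpow]; rfl
  have hperiod : Function.minimalPeriod (⇑π₀) j₀ = p := by
    have hdvd' : Function.minimalPeriod (⇑π₀) j₀ ∣ p :=
      Function.IsPeriodicPt.minimalPeriod_dvd hiter
    rcases (Fact.out : p.Prime).eq_one_or_self_of_dvd _ hdvd' with h1 | h1
    · exfalso
      have h2 := Function.iterate_minimalPeriod (f := ⇑π₀) (x := j₀)
      rw [h1] at h2
      simp only [Function.iterate_one] at h2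
      exact hj₀ h2
    · exact h1
  have key : ∀ k k' : ℕ, k < p → k' < p → (⇑π₀)^[k] j₀ = (⇑π₀)^[k'] j₀ → k = k' := by
    have main : ∀ k k' : ℕ, k ≤ k' → k' < p → (⇑π₀)^[k] j₀ = (⇑π₀)^[k'] j₀ → k = k' := by
      intro k k' hle hk' heqk
      by_contra hnee
      have hlt : 0 < k' - k := by omega
      have hy : (⇑π₀)^[k' - k] ((⇑π₀)^[k] j₀) = (⇑π₀)^[k] j₀ := by
        rw [← Function.iterate_add_apply, Nat.sub_add_cancel hle]
        exact heqk.symm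
      have hj : j₀ = (⇑π₀)^[p - k] ((⇑π₀)^[k] j₀) := by
        rw [← Function.iterate_add_apply,
          Nat.sub_add_cancel (le_of_lt (lt_of_le_of_lt hle hk'))]
        exact hiter.symm
      have hx : (⇑π₀)^[k' - k] j₀ = j₀ := by
        calc (⇑π₀)^[k' - k] j₀
            = (⇑π₀)^[k' - k] ((⇑π₀)^[p - k] ((⇑π₀)^[k] j₀)) := by rw [← hj]
          _ = (⇑π₀)^[(k' - k) + (p - k)] ((⇑π₀)^[k] j₀) := by
              rw [Function.iterate_add_apply]
          _ = (⇑π₀)^[p - k] ((⇑π₀)^[k' - k] ((⇑π₀)^[k] j₀)) := by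
              rw [Nat.add_comm, Function.iterate_add_apply]
          _ = (⇑π₀)^[p - k] ((⇑π₀)^[k] j₀) := by rw [hy]
          _ = j₀ := hj.symm
      have hdvd'' : p ∣ (k' - k) := by
        rw [← hperiod]
        exact Function.IsPeriodicPt.minimalPeriod_dvd hx
      have := Nat.le_of_dvd hlt hdvd''
      omega
    intro k k' hk hk' heqk
    rcases le_total k k' with h | h
    · exact main k k' h hk' heqk
    · exact (main k' k h hk heqk.symm).symm
  have hinj : Function.Injective (fun k : Fin p => (⇑π₀)^[(k : ℕ)] j₀) := by
    intro k k' hkk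
    exact Fin.ext (key k k' k.2 k'.2 hkk)
  refine ⟨univ.image (fun k : Fin p => (⇑π₀)^[(k : ℕ)] j₀), ?_, ?_⟩
  · rw [Finset.card_image_of_injective _ hinj, Finset.card_univ, Fintype.card_fin]
  · have hconst : ∀ k : ℕ, ρ ((⇑π₀)^[k] j₀) = ρ j₀ := by
      intro k
      induction k with
      | zero => rfl
      | succ k ih => rw [Function.iterate_succ_apply', hprop, ih]
    intro j hj j' hj'
    simp only [Finset.mem_image, Finset.mem_univ, true_and] at hj hj'
    obtain ⟨k, rfl⟩ := hj
    obtain ⟨k', rfl⟩ := hj'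
    rw [hconst, hconst]

end Core

section Steps

variable {K L : Type*} [Field K] [Field L] {p : ℕ} [Fact p.Prime] [CharP L p]

lemma bern_int (hp2 : 2 ≤ p) (l : ℕ) : (l : ℤ) * ((p : ℤ) - 1) ≤ (p : ℤ) ^ l - 1 := by
  have h := one_add_mul_le_pow (a := (p : ℤ) - 1) (by push_cast; omega) l
  have h2 : (1 + ((p : ℤ) - 1)) = (p : ℤ) := by ring
  rw [h2] at h
  linarith

lemma pow_p_inj (s : ℕ) {x y : L} (h : x ^ p ^ s = y ^ p ^ s) : x = y := by
  induction s with
  | zero => simpa using h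
  | succ s ih =>
    apply ih
    have hp : p ≠ 0 := (Fact.out : p.Prime).ne_zero
    have h1 : (x ^ p ^ s - y ^ p ^ s) ^ p = 0 := by
      rw [sub_pow_char, ← pow_mul, ← pow_mul, ← pow_succ, h, sub_self]
    exact sub_eq_zero.mp ((pow_eq_zero_iff hp).1 h1)

/-- `a ↦ σ a ^ p ^ c` as a ring hom. -/
noncomputable def rpow (p : ℕ) [Fact p.Prime] [CharP L p] (σ : K →+* L) (c : ℕ) : K →+* L :=
  (iterateFrobenius L p c).comp σ

lemma rpow_apply (σ : K →+* L) (c : ℕ) (a : K) : rpow p σ c a = σ a ^ p ^ c := rfl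

lemma LB {ι : Type*} [DecidableEq ι] :
    ∀ (N : ℕ) (S : Finset ι), S.card ≤ N → ∀ (σ : ι → K →+* L) (c : ι → ℕ) (τ : K →+* L),
      (∀ a, τ a = ∏ j ∈ S, σ j a ^ p ^ c j) →
      ∃ j ∈ S, ∃ l : ℕ, p ^ l ≤ ∑ j ∈ S, p ^ c j ∧ ∀ a, τ a = σ j a ^ p ^ l := by
  have hp2 : 2 ≤ p := (Fact.out : p.Prime).two_le
  intro N
  induction N with
  | zero =>
    intro S hS σ c τ h
    exfalso
    rw [Nat.le_zero, Finset.card_eq_zero] at hS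
    subst hS
    have h0 := h 0
    rw [Finset.prod_empty, map_zero] at h0
    exact one_ne_zero h0.symm
  | succ N IH =>
    intro S hS σ c τ h
    classical
    rcases Nat.lt_or_ge S.card 2 with hc2 | hc2
    · rcases Nat.eq_zero_or_pos S.card with hc0 | hc1
      · exfalso
        rw [Finset.card_eq_zero] at hc0
        subst hc0
        have h0 := h 0
        rw [Finset.prod_empty, map_zero] at h0
        exact one_ne_zero h0.symm
      · have hc1' : S.card = 1 := by omega
        obtain ⟨j, hj⟩ := Finset.card_eq_one.1 hc1'
        refine ⟨j, by simp [hj], c j, by rw [hj, Finset.sum_singleton], ?_⟩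
        intro a
        have := h a
        rwa [hj, Finset.prod_singleton] at this
    · have hS2 : 2 ≤ Fintype.card ↥S := by rwa [Fintype.card_coe]
      have hrel : ∀ a : K, ∏ i : Fin 1, (fun _ : Fin 1 => τ) i a
          = ∏ j : ↥S, rpow p (σ j.1) (c j.1) a := by
        intro a
        rw [Fin.prod_univ_one, h a, ← Finset.prod_coe_sort S (fun j => σ j a ^ p ^ c j)]
        rfl
      rcases core (p := p) (fun _ : Fin 1 => τ) (fun j : ↥S => rpow p (σ j.1) (c j.1)) hrel
        with hpart | hrep
      · exfalso
        obtain ⟨f, hf⟩ := hpart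
        obtain ⟨u, hu⟩ := Fintype.exists_ne_of_one_lt_card (by omega) (f 0)
        have h0 := hf u 0
        have hfil : univ.filter (fun i : Fin 1 => f i = u) = ∅ := by
          rw [Finset.eq_empty_iff_forall_notMem]
          intro i hi
          rw [Finset.mem_filter] at hi
          have hi0 : i = 0 := Subsingleton.elim _ _
          exact hu ((hi0 ▸ hi.2).symm)
        rw [hfil, Finset.prod_empty, map_zero] at h0
        exact one_ne_zero h0
      · obtain ⟨s', hs'card, hs'⟩ := hrep
        set s : Finset ι := s'.image Subtype.val with hs_def
        have hs_sub : s ⊆ S := by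
          intro j hj
          rw [hs_def, Finset.mem_image] at hj
          obtain ⟨jj, _, rfl⟩ := hj
          exact jj.2
        have hscard : s.card = p := by
          rw [hs_def, Finset.card_image_of_injective _ Subtype.val_injective, hs'card]
        have hρeq : ∀ j ∈ s, ∀ j' ∈ s, ∀ a : K, σ j a ^ p ^ c j = σ j' a ^ p ^ c j' := by
          intro j hj j' hj' a
          rw [hs_def, Finset.mem_image] at hj hj'
          obtain ⟨jj, hjj, rfl⟩ := hj
          obtain ⟨jj', hjj', rfl⟩ := hj'
          exact DFunLike.congr_fun (hs' jj hjj jj' hjj') a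
        have hsne : s.Nonempty := by
          rw [← Finset.card_pos, hscard]; omega
        obtain ⟨jm, hjm, hjmin⟩ := Finset.exists_min_image s c hsne
        have hjmS : jm ∈ S := hs_sub hjm
        have hjmT : jm ∉ S \ s := by simp [Finset.mem_sdiff, hjm]
        set S'' : Finset ι := insert jm (S \ s) with hS''_def
        set c'' : ι → ℕ := Function.update c jm (c jm + 1) with hc''_def
        have hcard'' : S''.card ≤ N := by
          rw [hS''_def, Finset.card_insert_of_notMem hjmT, Finset.card_sdiff_of_subset hs_sub, hscard]
          omega
        have hTc : ∀ j ∈ S \ s, c'' j = c j := by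
          intro j hj
          have hjne : j ≠ jm := by
            intro hje
            rw [Finset.mem_sdiff] at hj
            exact hj.2 (hje ▸ hjm)
          rw [hc''_def, Function.update_of_ne hjne]
        have hmerge : ∀ a : K, ∏ j ∈ s, σ j a ^ p ^ c j = σ jm a ^ p ^ c'' jm := by
          intro a
          rw [Finset.prod_congr rfl (fun j hj => hρeq j hj jm hjm a), Finset.prod_const, hscard,
            hc''_def, Function.update_self, ← pow_mul, pow_succ]
        have hnew : ∀ a, τ a = ∏ j ∈ S'', σ j a ^ p ^ c'' j := by
          intro a
          have e1 : ∏ j ∈ S \ s, σ j a ^ p ^ c'' j = ∏ j ∈ S \ s, σ j a ^ p ^ c j :=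
            Finset.prod_congr rfl (fun j hj => by rw [hTc j hj])
          rw [hS''_def, Finset.prod_insert hjmT, e1, h a, ← Finset.prod_sdiff hs_sub, hmerge a,
            mul_comm]
        have hweight : ∑ j ∈ S'', p ^ c'' j ≤ ∑ j ∈ S, p ^ c j := by
          have h1 : ∑ j ∈ S'', p ^ c'' j = p ^ c'' jm + ∑ j ∈ S \ s, p ^ c j := by
            rw [hS''_def, Finset.sum_insert hjmT]
            congr 1
            exact Finset.sum_congr rfl (fun j hj => by rw [hTc j hj])
          have h2 : ∑ j ∈ S, p ^ c j = ∑ j ∈ S \ s, p ^ c j + ∑ j ∈ s, p ^ c j := by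
            rw [Finset.sum_sdiff hs_sub]
          have h3 : p ^ c'' jm ≤ ∑ j ∈ s, p ^ c j := by
            have h4 : ∑ j ∈ s, p ^ c jm ≤ ∑ j ∈ s, p ^ c j :=
              Finset.sum_le_sum (fun j hj => Nat.pow_le_pow_right (by omega) (hjmin j hj))
            rw [Finset.sum_const, hscard, smul_eq_mul] at h4
            rw [hc''_def, Function.update_self, pow_succ]
            calc p ^ c jm * p ≤ p * p ^ c jm := by rw [Nat.mul_comm]
              _ ≤ ∑ j ∈ s, p ^ c j := h4
          omega
        obtain ⟨j, hjS'', l, hl, heql⟩ := IH S'' hcard'' σ c'' τ hnew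
        have hjS : j ∈ S := by
          rw [hS''_def, Finset.mem_insert] at hjS''
          rcases hjS'' with h' | h'
          · exact h' ▸ hjmS
          · exact (Finset.mem_sdiff.1 h').1
        exact ⟨j, hjS, l, le_trans hl hweight, heql⟩

end Steps

section ML

variable {K L : Type*} [Field K] [Field L] {p : ℕ} [Fact p.Prime] [CharP L p]

lemma ML {ι : Type*} [DecidableEq ι] {n : ℕ} (σ : Fin n → K →+* L) (τ : ι → K →+* L) :
    ∀ (N : ℕ) (S : Finset ι), S.card ≤ N → ∀ (d : ι → ℕ),
      (∀ a, ∏ i, σ i a = ∏ j ∈ S, τ j a ^ p ^ d j) →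
      ∀ j₀ ∈ S, ∃ (i : Fin n) (s t : ℕ),
        (∀ a, τ j₀ a ^ p ^ s = σ i a ^ p ^ t) ∧
        p ^ t * p ^ d j₀ ≤ n * p ^ s ∧
        ((s : ℤ) - t) * ((p : ℤ) - 1) ≤ ((∑ j ∈ S, p ^ d j : ℕ) : ℤ) - 1 := by
  have hp2 : 2 ≤ p := (Fact.out : p.Prime).two_le
  intro N
  induction N with
  | zero =>
    intro S hS d hrel j₀ hj₀
    exfalso
    rw [Nat.le_zero, Finset.card_eq_zero] at hS
    subst hS
    simp at hj₀
  | succ N IH =>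
    intro S hS d hrel j₀ hj₀
    classical
    have hrel' : ∀ a : K, ∏ i, σ i a = ∏ j : ↥S, rpow p (τ j.1) (d j.1) a := by
      intro a
      rw [hrel a, ← Finset.prod_coe_sort S (fun j => τ j a ^ p ^ d j)]
      rfl
    rcases core (p := p) σ (fun j : ↥S => rpow p (τ j.1) (d j.1)) hrel' with hpart | hrep
    · -- partition case
      obtain ⟨f, hf⟩ := hpart
      set u₀ : ↥S := ⟨j₀, hj₀⟩ with hu₀
      set B : Finset (Fin n) := univ.filter (fun i => f i = u₀) with hB_def
      have hB : ∀ a : K, rpow p (τ j₀) (d j₀) a = ∏ i ∈ B, σ i a ^ p ^ (0:ℕ) := by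
        intro a
        rw [← hf u₀ a]
        exact Finset.prod_congr rfl (fun i _ => by rw [pow_zero, pow_one])
      obtain ⟨i, hiB, l, hl, heql⟩ := LB B.card B le_rfl σ (fun _ => 0)
        (rpow p (τ j₀) (d j₀)) hB
      have hln : p ^ l ≤ n := by
        refine le_trans hl ?_
        have : ∑ j ∈ B, p ^ (0:ℕ) = B.card := by simp
        rw [this]
        exact le_trans (Finset.card_filter_le _ _) (by simp)
      refine ⟨i, d j₀, l, ?_, ?_, ?_⟩
      · intro a
        exact heql a
      · rw [Nat.mul_comm (p ^ l)]
        exact Nat.mul_le_mul (Nat.le_refl _) hln |>.trans (by rw [Nat.mul_comm])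
      · have h1 : ((d j₀ : ℤ) - l) * ((p:ℤ) - 1) ≤ (d j₀ : ℤ) * ((p:ℤ) - 1) := by
          have : ((d j₀ : ℤ) - l) ≤ (d j₀ : ℤ) := by omega
          exact mul_le_mul_of_nonneg_right this (by push_cast; omega)
        have h2 : (d j₀ : ℤ) * ((p:ℤ) - 1) ≤ (p:ℤ) ^ d j₀ - 1 := bern_int hp2 _
        have h3 : (p:ℕ) ^ d j₀ ≤ ∑ j ∈ S, p ^ d j :=
          Finset.single_le_sum (f := fun j => p ^ d j) (fun j _ => Nat.zero_le _) hj₀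
        have h3' : ((p:ℤ)) ^ d j₀ ≤ ((∑ j ∈ S, p ^ d j : ℕ) : ℤ) := by exact_mod_cast h3
        linarith
    · -- merge case
      obtain ⟨s', hs'card, hs'⟩ := hrep
      set s : Finset ι := s'.image Subtype.val with hs_def
      have hs_sub : s ⊆ S := by
        intro j hj
        rw [hs_def, Finset.mem_image] at hj
        obtain ⟨jj, _, rfl⟩ := hj
        exact jj.2
      have hscard : s.card = p := by
        rw [hs_def, Finset.card_image_of_injective _ Subtype.val_injective, hs'card]
      have hτeq : ∀ j ∈ s, ∀ j' ∈ s, ∀ a : K, τ j a ^ p ^ d j = τ j' a ^ p ^ d j' := by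
        intro j hj j' hj' a
        rw [hs_def, Finset.mem_image] at hj hj'
        obtain ⟨jj, hjj, rfl⟩ := hj
        obtain ⟨jj', hjj', rfl⟩ := hj'
        exact DFunLike.congr_fun (hs' jj hjj jj' hjj') a
      have hsne : s.Nonempty := by
        rw [← Finset.card_pos, hscard]; omega
      obtain ⟨jm, hjm, hjmin⟩ := Finset.exists_min_image s d hsne
      have hjmS : jm ∈ S := hs_sub hjm
      have hjmT : jm ∉ S \ s := by simp [Finset.mem_sdiff, hjm]
      set S'' : Finset ι := insert jm (S \ s) with hS''_def
      set d'' : ι → ℕ := Function.update d jm (d jm + 1) with hd''_def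
      have hd''jm : d'' jm = d jm + 1 := by rw [hd''_def, Function.update_self]
      have hcard'' : S''.card ≤ N := by
        rw [hS''_def, Finset.card_insert_of_notMem hjmT, Finset.card_sdiff_of_subset hs_sub, hscard]
        have : p ≤ S.card := by
          calc p = s.card := hscard.symm
            _ ≤ S.card := Finset.card_le_card hs_sub
        omega
      have hTd : ∀ j ∈ S \ s, d'' j = d j := by
        intro j hj
        have hjne : j ≠ jm := by
          intro hje
          rw [Finset.mem_sdiff] at hj
          exact hj.2 (hje ▸ hjm)
        rw [hd''_def, Function.update_of_ne hjne]
      have hmerge : ∀ a : K, ∏ j ∈ s, τ j a ^ p ^ d j = τ jm a ^ p ^ d'' jm := by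
        intro a
        rw [Finset.prod_congr rfl (fun j hj => hτeq j hj jm hjm a), Finset.prod_const, hscard,
          hd''jm, ← pow_mul, pow_succ]
      have hnew : ∀ a, ∏ i, σ i a = ∏ j ∈ S'', τ j a ^ p ^ d'' j := by
        intro a
        have e1 : ∏ j ∈ S \ s, τ j a ^ p ^ d'' j = ∏ j ∈ S \ s, τ j a ^ p ^ d j :=
          Finset.prod_congr rfl (fun j hj => by rw [hTd j hj])
        rw [hS''_def, Finset.prod_insert hjmT, e1, hrel a, ← Finset.prod_sdiff hs_sub, hmerge a,
          mul_comm]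
      have hsum'' : ∑ j ∈ S'', p ^ d'' j = p ^ (d jm + 1) + ∑ j ∈ S \ s, p ^ d j := by
        rw [hS''_def, Finset.sum_insert hjmT, hd''jm]
        congr 1
        exact Finset.sum_congr rfl (fun j hj => by rw [hTd j hj])
      have hsumS : ∑ j ∈ S, p ^ d j = ∑ j ∈ S \ s, p ^ d j + ∑ j ∈ s, p ^ d j := by
        rw [Finset.sum_sdiff hs_sub]
      have hsmall : p ^ (d jm + 1) ≤ ∑ j ∈ s, p ^ d j := by
        have h4 : ∑ j ∈ s, p ^ d jm ≤ ∑ j ∈ s, p ^ d j :=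
          Finset.sum_le_sum (fun j hj => Nat.pow_le_pow_right (by omega) (hjmin j hj))
        rw [Finset.sum_const, hscard, smul_eq_mul] at h4
        rw [pow_succ]
        calc p ^ d jm * p = p * p ^ d jm := by rw [Nat.mul_comm]
          _ ≤ ∑ j ∈ s, p ^ d j := h4
      have hweight : ∑ j ∈ S'', p ^ d'' j ≤ ∑ j ∈ S, p ^ d j := by omega
      by_cases hj₀s : j₀ ∈ s
      · -- j₀ was merged
        have hdmin : d jm ≤ d j₀ := hjmin j₀ hj₀s
        obtain ⟨i, s₁, t₁, heq1, hI1, hI2⟩ :=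
          IH S'' hcard'' d'' hnew jm (Finset.mem_insert_self _ _)
        rw [hd''jm] at hI1
        have e0 : ∀ a : K, τ j₀ a ^ p ^ d j₀ = τ jm a ^ p ^ d jm := fun a => hτeq j₀ hj₀s jm hjm a
        refine ⟨i, d j₀ + s₁, t₁ + d jm, ?_, ?_, ?_⟩
        · intro a
          calc τ j₀ a ^ p ^ (d j₀ + s₁)
              = (τ j₀ a ^ p ^ d j₀) ^ p ^ s₁ := by rw [← pow_mul, pow_add]
            _ = (τ jm a ^ p ^ d jm) ^ p ^ s₁ := by rw [e0 a]
            _ = (τ jm a ^ p ^ s₁) ^ p ^ d jm := by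
                rw [← pow_mul, ← pow_mul, Nat.mul_comm]
            _ = (σ i a ^ p ^ t₁) ^ p ^ d jm := by rw [heq1 a]
            _ = σ i a ^ p ^ (t₁ + d jm) := by rw [← pow_mul, ← pow_add]
        · -- p ^ (t₁ + d jm) * p ^ d j₀ ≤ n * p ^ (d j₀ + s₁)
          calc p ^ (t₁ + d jm) * p ^ d j₀
              = (p ^ t₁ * p ^ d jm) * p ^ d j₀ := by rw [pow_add]
            _ ≤ (p ^ t₁ * p ^ (d jm + 1)) * p ^ d j₀ := by
                have : (p:ℕ) ^ d jm ≤ p ^ (d jm + 1) := Nat.pow_le_pow_right (by omega) (by omega)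
                exact Nat.mul_le_mul_right _ (Nat.mul_le_mul_left _ this)
            _ ≤ (n * p ^ s₁) * p ^ d j₀ := Nat.mul_le_mul_right _ hI1
            _ = n * p ^ (d j₀ + s₁) := by rw [pow_add]; ring
        · -- (s - t)(p-1) bound
          have key2 : ((d j₀ : ℤ) - d jm) * ((p:ℤ) - 1)
              ≤ ((∑ j ∈ S, p ^ d j : ℕ) : ℤ) - ((∑ j ∈ S'', p ^ d'' j : ℕ) : ℤ) := by
            have hgap1 : ((∑ j ∈ s, p ^ d j : ℕ) : ℤ)
                ≥ (p:ℤ) ^ d j₀ + ((p:ℤ) - 1) * (p:ℤ) ^ d jm := by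
              have hsplit : ∑ j ∈ s, p ^ d j = p ^ d j₀ + ∑ j ∈ s.erase j₀, p ^ d j :=
                (Finset.add_sum_erase s (fun j => p ^ d j) hj₀s).symm
              have herase : ∑ j ∈ s.erase j₀, p ^ d jm ≤ ∑ j ∈ s.erase j₀, p ^ d j :=
                Finset.sum_le_sum (fun j hj =>
                  Nat.pow_le_pow_right (by omega) (hjmin j (Finset.mem_of_mem_erase hj)))
              rw [Finset.sum_const, Finset.card_erase_of_mem hj₀s, hscard, smul_eq_mul] at herase
              have : (p - 1) * p ^ d jm ≤ ∑ j ∈ s.erase j₀, p ^ d j := herase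
              have hcast : ((p:ℤ) - 1) * (p:ℤ) ^ d jm ≤ ((∑ j ∈ s.erase j₀, p ^ d j : ℕ) : ℤ) := by
                have := (Nat.cast_le (α := ℤ)).2 this
                push_cast at this ⊢
                have hp1 : ((p:ℤ) - 1) = ((p - 1 : ℕ) : ℤ) := by push_cast; omega
                rw [hp1]
                exact this
              have hsplit' : ((∑ j ∈ s, p ^ d j : ℕ) : ℤ)
                  = (p:ℤ) ^ d j₀ + ((∑ j ∈ s.erase j₀, p ^ d j : ℕ) : ℤ) := by
                rw [hsplit]; push_cast; ring
              linarith
            have hgap2 : ((∑ j ∈ S, p ^ d j : ℕ) : ℤ) - ((∑ j ∈ S'', p ^ d'' j : ℕ) : ℤ)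
                = ((∑ j ∈ s, p ^ d j : ℕ) : ℤ) - (p:ℤ) ^ (d jm + 1) := by
              rw [hsum'', hsumS]; push_cast; ring
            have hbound : ((d j₀ : ℤ) - d jm) * ((p:ℤ) - 1)
                ≤ (p:ℤ) ^ d j₀ - (p:ℤ) ^ d jm := by
              set g : ℕ := d j₀ - d jm with hg_def
              have hgz : (d j₀ : ℤ) - d jm = (g : ℤ) := by omega
              have hb := bern_int hp2 g
              have hpw : (p:ℤ) ^ d j₀ = (p:ℤ) ^ d jm * (p:ℤ) ^ g := by
                rw [← pow_add]
                congr 1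
                omega
              have hpos : (1:ℤ) ≤ (p:ℤ) ^ d jm := one_le_pow₀ (by push_cast; omega)
              have hpg : (1:ℤ) ≤ (p:ℤ) ^ g := one_le_pow₀ (by push_cast; omega)
              have h6 : (p:ℤ) ^ g - 1 ≤ (p:ℤ) ^ d jm * ((p:ℤ) ^ g - 1) :=
                le_mul_of_one_le_left (by linarith) hpos
              rw [hgz, hpw]
              nlinarith [hb, h6]
            have hppow : (p:ℤ) ^ (d jm + 1) = (p:ℤ) ^ d jm * (p:ℤ) := by rw [pow_succ]
            linarith
          have key1 := hI2
          have hfin : ((d j₀ + s₁ : ℕ) : ℤ) - ((t₁ + d jm : ℕ) : ℤ)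
              = ((s₁:ℤ) - t₁) + ((d j₀ : ℤ) - d jm) := by push_cast; ring
          calc (((d j₀ + s₁ : ℕ) : ℤ) - ((t₁ + d jm : ℕ) : ℤ)) * ((p:ℤ) - 1)
              = ((s₁:ℤ) - t₁) * ((p:ℤ) - 1) + ((d j₀:ℤ) - d jm) * ((p:ℤ) - 1) := by
                rw [hfin]; ring
            _ ≤ (((∑ j ∈ S'', p ^ d'' j : ℕ) : ℤ) - 1)
                + (((∑ j ∈ S, p ^ d j : ℕ) : ℤ) - ((∑ j ∈ S'', p ^ d'' j : ℕ) : ℤ)) := by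
                exact add_le_add key1 key2
            _ = ((∑ j ∈ S, p ^ d j : ℕ) : ℤ) - 1 := by ring
      · -- j₀ survives
        have hj₀'' : j₀ ∈ S'' := by
          rw [hS''_def]
          exact Finset.mem_insert_of_mem (Finset.mem_sdiff.2 ⟨hj₀, hj₀s⟩)
        obtain ⟨i, s₁, t₁, heq1, hI1, hI2⟩ := IH S'' hcard'' d'' hnew j₀ hj₀''
        have hd''j₀ : d'' j₀ = d j₀ := by
          have hjne : j₀ ≠ jm := fun hje => hj₀s (hje ▸ hjm)
          rw [hd''_def, Function.update_of_ne hjne]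
        rw [hd''j₀] at hI1
        refine ⟨i, s₁, t₁, heq1, hI1, le_trans hI2 ?_⟩
        have := (Nat.cast_le (α := ℤ)).2 hweight
        omega

end ML

section Final

variable {K L : Type*} [Field K] [Field L] {p : ℕ} [Fact p.Prime] [CharP L p]

lemma finalize {Nn Mm : ℕ} (hN : 1 ≤ Nn) (hM : 1 ≤ Mm)
    (A : K →+* L) (B : Fin Nn → K →+* L)
    (h : ∃ (i : Fin Nn) (s t : ℕ), (∀ a, A a ^ p ^ s = B i a ^ p ^ t) ∧
      p ^ t ≤ Nn * p ^ s ∧ ((s : ℤ) - t) * ((p : ℤ) - 1) ≤ (Mm : ℤ) - 1) :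
    ∃ l : ℤ, -((Mm : ℤ) - 1) ≤ l * ((p : ℤ) - 1) ∧ l * ((p : ℤ) - 1) ≤ (Nn : ℤ) - 1 ∧
      ∃ i : Fin Nn, ∀ a : K, A a ^ (p : ℕ) ^ ((-l).toNat) = B i a ^ (p : ℕ) ^ l.toNat := by
  obtain ⟨i, s, t, heq, h1, h2⟩ := h
  have hp2 : 2 ≤ p := (Fact.out : p.Prime).two_le
  rcases le_total s t with hst | hts
  · refine ⟨((t - s : ℕ) : ℤ), ?_, ?_, i, ?_⟩
    · have hnn : (0:ℤ) ≤ ((t - s : ℕ) : ℤ) * ((p:ℤ) - 1) :=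
        mul_nonneg (by positivity) (by push_cast; omega)
      have : (1:ℤ) ≤ (Mm:ℤ) := by exact_mod_cast hM
      linarith
    · have hpt : (p:ℕ) ^ (t - s) ≤ Nn := by
        have hmul : p ^ (t - s) * p ^ s ≤ Nn * p ^ s := by
          rw [← pow_add, Nat.sub_add_cancel hst]
          exact h1
        exact Nat.le_of_mul_le_mul_right hmul (Nat.pow_pos (by omega))
      have hb := bern_int hp2 (t - s)
      have hcast : ((p:ℤ)) ^ (t - s) ≤ (Nn : ℤ) := by exact_mod_cast hpt
      linarith
    · intro a
      have hl1 : ((-(((t - s : ℕ) : ℤ))).toNat) = 0 := by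
        simp [Int.toNat_of_nonpos]
      have hl2 : (((t - s : ℕ) : ℤ)).toNat = t - s := Int.toNat_natCast _
      rw [hl1, hl2, pow_zero, pow_one]
      -- A a = B i a ^ p ^ (t - s)
      apply pow_p_inj (p := p) s
      rw [heq a, ← pow_mul, ← pow_add, Nat.sub_add_cancel hst]
  · refine ⟨-((s - t : ℕ) : ℤ), ?_, ?_, i, ?_⟩
    · have hgz : ((s:ℤ) - t) = ((s - t : ℕ) : ℤ) := by omega
      rw [hgz] at h2
      linarith
    · have hnn : (0:ℤ) ≤ ((s - t : ℕ) : ℤ) * ((p:ℤ) - 1) :=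
        mul_nonneg (by positivity) (by push_cast; omega)
      have : (1:ℤ) ≤ (Nn:ℤ) := by exact_mod_cast hN
      have : -(((s - t : ℕ) : ℤ)) * ((p:ℤ) - 1) ≤ 0 := by linarith
      linarith
    · intro a
      have hl1 : ((-(-((s - t : ℕ) : ℤ))).toNat) = s - t := by
        rw [neg_neg]
        exact Int.toNat_natCast _
      have hl2 : ((-((s - t : ℕ) : ℤ)).toNat) = 0 := by
        simp [Int.toNat_of_nonpos]
      rw [hl1, hl2, pow_zero, pow_one]
      -- A a ^ p ^ (s - t) = B i a
      apply pow_p_inj (p := p) t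
      rw [← pow_mul, ← pow_add, Nat.sub_add_cancel hts]
      exact heq a
  
end Final

theorem stmt_14 {K L : Type*} [Field K] [Field L] (p : ℕ) [Fact p.Prime]
    [CharP K p] [CharP L p] (n m : ℕ) (hnm : m ≤ n) (hm : 1 ≤ m)
    (σ : Fin n → (K →+* L)) (τ : Fin m → (K →+* L))
    (heq : ∀ a : K, ∏ i : Fin n, σ i a = ∏ j : Fin m, τ j a)
    (hrep : ∃ s : Finset (Fin n), s.card = p ∧ ∀ i ∈ s, ∀ j ∈ s, σ i = σ j) :
    (∀ j : Fin m, ∃ l : ℤ, -((m : ℤ) - 1) ≤ l * ((p : ℤ) - 1) ∧ l * ((p : ℤ) - 1) ≤ (n : ℤ) - 1 ∧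
      ∃ i : Fin n, ∀ a : K, τ j a ^ (p : ℕ) ^ ((-l).toNat) = σ i a ^ (p : ℕ) ^ l.toNat) ∧
    (∀ i : Fin n, ∃ l : ℤ, -((n : ℤ) - 1) ≤ l * ((p : ℤ) - 1) ∧ l * ((p : ℤ) - 1) ≤ (m : ℤ) - 1 ∧
      ∃ j : Fin m, ∀ a : K, σ i a ^ (p : ℕ) ^ ((-l).toNat) = τ j a ^ (p : ℕ) ^ l.toNat) := by
  classical
  have hn : 1 ≤ n := le_trans hm hnm
  have hWm : ∑ j ∈ (univ : Finset (Fin m)), p ^ (0:ℕ) = m := by simp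
  have hWn : ∑ j ∈ (univ : Finset (Fin n)), p ^ (0:ℕ) = n := by simp
  constructor
  · intro j
    have hrel : ∀ a : K, ∏ i, σ i a = ∏ j' ∈ (univ : Finset (Fin m)), τ j' a ^ p ^ (0:ℕ) := by
      intro a
      rw [heq a]
      exact Finset.prod_congr rfl (fun j' _ => by rw [pow_zero, pow_one])
    obtain ⟨i, s, t, heq1, hI1, hI2⟩ :=
      ML σ τ m univ (by simp) (fun _ => 0) hrel j (Finset.mem_univ j)
    rw [hWm] at hI2
    rw [pow_zero, Nat.mul_one] at hI1
    exact finalize hn hm (τ j) σ ⟨i, s, t, heq1, hI1, hI2⟩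
  · intro i
    have hrel : ∀ a : K, ∏ j, τ j a = ∏ i' ∈ (univ : Finset (Fin n)), σ i' a ^ p ^ (0:ℕ) := by
      intro a
      rw [← heq a]
      exact Finset.prod_congr rfl (fun i' _ => by rw [pow_zero, pow_one])
    obtain ⟨j, s, t, heq1, hI1, hI2⟩ :=
      ML τ σ n univ (by simp) (fun _ => 0) hrel i (Finset.mem_univ i)
    rw [hWn] at hI2
    rw [pow_zero, Nat.mul_one] at hI1
    exact finalize hm hn (σ i) τ ⟨j, s, t, heq1, hI1, hI2⟩
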